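/- Let W ⊆ S^{n+1} be a spherical convex body of the form W = ⋂_{i=1}^k H(Pᵢ) for finitely many points P₁,…,P_k (polytope type). Then W = W° if and only if each Pᵢ is a point of W and W = s-conv{P₁,…,P_k}. -/

import Mathlib

open scoped RealInnerProductSpace BigOperators
open Real

namespace Sph

/-- Ambient Euclidean space `ℝ^{n+2}` containing the sphere `S^{n+1}`. -/
abbrev E (n : ℕ) := EuclideanSpace ℝ (Fin (n + 2))

/-- The unit sphere `S^{n+1} ⊂ ℝ^{n+2}`. -/
def sph (n : ℕ) : Set (E n) := {x | ‖x‖ = 1}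

/-- The closed hemisphere `H(P)` centered at `P`. -/
def hemi {n : ℕ} (P : E n) : Set (E n) := {Q | ‖Q‖ = 1 ∧ 0 ≤ ⟪P, Q⟫}

/-- The boundary `∂H(P)` of the hemisphere centered at `P`. -/
def hemiBdry {n : ℕ} (P : E n) : Set (E n) := {Q | ‖Q‖ = 1 ∧ ⟪P, Q⟫ = 0}

/-- Geodesic (angular) distance on the unit sphere. -/
noncomputable def gdist {n : ℕ} (P Q : E n) : ℝ := Real.arccos ⟪P, Q⟫

/-- Radial normalization of a vector. -/
noncomputable def nmz {n : ℕ} (x : E n) : E n := ‖x‖⁻¹ • x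

/-- The geodesic arc joining `P` and `Q`. -/
noncomputable def arc {n : ℕ} (P Q : E n) : Set (E n) :=
  {X | ∃ t ∈ Set.Icc (0 : ℝ) 1, X = nmz ((1 - t) • P + t • Q)}

/-- A subset of the sphere is hemispherical if it misses some closed hemisphere. -/
def Hemispherical {n : ℕ} (W : Set (E n)) : Prop := ∃ P ∈ sph n, W ∩ hemi P = ∅

/-- Spherical convexity: a subset of the sphere closed under geodesic arcs. -/
noncomputable def SphConvex {n : ℕ} (W : Set (E n)) : Prop :=
  W ⊆ sph n ∧ ∀ P ∈ W, ∀ Q ∈ W, arc P Q ⊆ W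

/-- Interior of `W` relative to the sphere. -/
def sphInterior {n : ℕ} (W : Set (E n)) : Set (E n) :=
  {X | X ∈ W ∧ ∃ U : Set (E n), IsOpen U ∧ X ∈ U ∧ U ∩ sph n ⊆ W}

/-- Frontier of `W` relative to the sphere. -/
def sphFrontier {n : ℕ} (W : Set (E n)) : Set (E n) :=
  closure W ∩ closure (sph n \ W)

/-- A spherical convex body: closed, hemispherical, spherically convex,
with an interior point. -/
noncomputable def SphConvexBody {n : ℕ} (W : Set (E n)) : Prop :=
  IsClosed W ∧ Hemispherical W ∧ SphConvex W ∧ (sphInterior W).Nonempty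

/-- The hemisphere `H(P)` supports `W`. -/
noncomputable def Supports {n : ℕ} (W : Set (E n)) (P : E n) : Prop :=
  P ∈ sph n ∧ W ⊆ hemi P ∧ (sphFrontier W ∩ hemiBdry P).Nonempty

/-- The width of `W` determined by the supporting hemisphere `H(P)`:
the minimum thickness `π - |PQ|` of lunes `H(P) ∩ H(Q)` over supporting
hemispheres `H(Q)` (so that `W ⊆ H(P) ∩ H(Q)`). -/
noncomputable def widthAt {n : ℕ} (W : Set (E n)) (P : E n) : ℝ :=
  sInf {d | ∃ Q, Supports W Q ∧ d = π - gdist P Q}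

/-- `W` is of constant width `ρ`. -/
noncomputable def ConstWidth {n : ℕ} (W : Set (E n)) (ρ : ℝ) : Prop :=
  ∀ P, Supports W P → widthAt W P = ρ

/-- The spherical polar set `W° = ⋂_{P ∈ W} H(P)` (as a subset of the sphere). -/
def polar {n : ℕ} (W : Set (E n)) : Set (E n) :=
  {Q | ‖Q‖ = 1 ∧ ∀ P ∈ W, 0 ≤ ⟪P, Q⟫}

/-- The diameter of `W`: the supremum of geodesic distances between its points. -/
noncomputable def diam {n : ℕ} (W : Set (E n)) : ℝ :=
  sSup {d | ∃ P ∈ W, ∃ Q ∈ W, d = gdist P Q}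

/-- The spherical convex hull: normalized nonnegative convex combinations. -/
noncomputable def sconv {n : ℕ} (W : Set (E n)) : Set (E n) :=
  {X | ∃ (k : ℕ) (t : Fin k → ℝ) (f : Fin k → E n), (∀ i, f i ∈ W) ∧
    (∀ i, 0 ≤ t i) ∧ (∑ i, t i) = 1 ∧ X = nmz (∑ i, t i • f i)}

/-- Embedding `x ↦ (x, 1)` of `ℝ^{n+1}` into `ℝ^{n+2}`. -/
noncomputable def lift {n : ℕ} (x : EuclideanSpace ℝ (Fin (n + 1))) : E n :=
  (WithLp.equiv 2 (Fin (n + 2) → ℝ)).symm (Fin.snoc (fun i => x i) 1)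

/-- The north pole `N = (0, …, 0, 1)`. -/
noncomputable def north (n : ℕ) : E n := EuclideanSpace.single (Fin.last (n + 1)) 1

end Sph

open Sph

section ConeLemmas

variable {H : Type*} [NormedAddCommGroup H] [InnerProductSpace ℝ H] [FiniteDimensional ℝ H]

variable {H : Type*} [NormedAddCommGroup H] [InnerProductSpace ℝ H] [FiniteDimensional ℝ H]

/-- Cone of nonnegative combinations of `P i`, `i ∈ s`. -/
def coneOf {k : ℕ} (P : Fin k → H) (s : Finset (Fin k)) : Set H :=
  {x | ∃ t : Fin k → ℝ, (∀ i, 0 ≤ t i) ∧ (∀ i ∉ s, t i = 0) ∧ x = ∑ i, t i • P i}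

lemma sum_support {k : ℕ} (P : Fin k → H) (s : Finset (Fin k)) (t : Fin k → ℝ)
    (h : ∀ i ∉ s, t i = 0) : ∑ i, t i • P i = ∑ i : ↥s, t i • P i := by
  rw [Finset.sum_coe_sort s (fun i => t i • P i)]
  refine (Finset.sum_subset s.subset_univ ?_).symm
  intro i _ hi
  rw [h i hi, zero_smul]

lemma isClosed_coneOf_of_li {k : ℕ} (P : Fin k → H) (s : Finset (Fin k))
    (hli : LinearIndependent ℝ (fun i : ↥s => P i)) : IsClosed (coneOf P s) := by
  classical
  let g : (↥s → ℝ) →ₗ[ℝ] H :=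
    { toFun := fun t => ∑ i : ↥s, t i • P (i : Fin k)
      map_add' := by intro a b; simp [add_smul, Finset.sum_add_distrib]
      map_smul' := by intro c a; simp [smul_smul, Finset.smul_sum] }
  have hker : LinearMap.ker g = ⊥ := by
    rw [LinearMap.ker_eq_bot']
    intro m hm
    funext i
    exact Fintype.linearIndependent_iff.mp hli m hm i
  have hemb : Topology.IsClosedEmbedding g := LinearMap.isClosedEmbedding_of_injective hker
  have hcl : IsClosed {t : ↥s → ℝ | ∀ i, 0 ≤ t i} := by
    have : {t : ↥s → ℝ | ∀ i, 0 ≤ t i} = ⋂ i, {t | 0 ≤ t i} := by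
      ext t; simp [Set.mem_iInter]
    rw [this]
    exact isClosed_iInter fun i => IsClosed.preimage (continuous_apply i) isClosed_Ici
  have himg : coneOf P s = g '' {t : ↥s → ℝ | ∀ i, 0 ≤ t i} := by
    ext x
    constructor
    · rintro ⟨t, ht0, hts, rfl⟩
      exact ⟨fun i => t i, fun i => ht0 i, (sum_support P s t hts).symm⟩
    · rintro ⟨t, ht0, rfl⟩
      refine ⟨fun i => if h : i ∈ s then t ⟨i, h⟩ else 0, ?_, ?_, ?_⟩
      · intro i; by_cases h : i ∈ s
        · simpa [h] using ht0 ⟨i, h⟩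
        · simp [h]
      · intro i hi; simp [hi]
      · rw [sum_support P s _ (fun i hi => by simp [hi])]
        show _ = ∑ i : ↥s, _
        simp [g]
  rw [himg]
  exact hemb.isClosedMap _ hcl

lemma coneOf_mono {k : ℕ} (P : Fin k → H) {s s' : Finset (Fin k)} (h : s ⊆ s') :
    coneOf P s ⊆ coneOf P s' := by
  rintro x ⟨t, ht0, hts, rfl⟩
  exact ⟨t, ht0, fun i hi => hts i (fun hh => hi (h hh)), rfl⟩

lemma coneOf_reduce {k : ℕ} (P : Fin k → H) (s : Finset (Fin k))
    (hli : ¬ LinearIndependent ℝ (fun i : ↥s => P i)) :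
    coneOf P s = ⋃ j ∈ s, coneOf P (s.erase j) := by
  classical
  apply Set.Subset.antisymm
  · rintro x ⟨t, ht0, hts, rfl⟩
    obtain ⟨c₀, hc₀sum, i₀, hi₀⟩ := Fintype.not_linearIndependent_iff.mp hli
    have key : ∀ c : Fin k → ℝ, (∀ i ∉ s, c i = 0) → (∑ i, c i • P i = 0) →
        (∃ j, 0 < c j) →
        ∃ j ∈ s, (∑ i, t i • P i) ∈ coneOf P (s.erase j) := by
      rintro c hcs hcsum ⟨j₁, hj₁⟩
      set T : Finset (Fin k) := Finset.univ.filter (fun i => 0 < c i) with hT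
      have hTne : T.Nonempty := ⟨j₁, by simp [hT, hj₁]⟩
      obtain ⟨j₀, hj₀T, hj₀min⟩ := T.exists_min_image (fun i => t i / c i) hTne
      have hcj₀ : 0 < c j₀ := by simpa [hT] using hj₀T
      have hj₀s : j₀ ∈ s := by
        by_contra h
        exact absurd (hcs j₀ h) (ne_of_gt hcj₀)
      set r : ℝ := t j₀ / c j₀ with hr
      have hr0 : 0 ≤ r := div_nonneg (ht0 j₀) hcj₀.le
      refine ⟨j₀, hj₀s, fun i => t i - r * c i, ?_, ?_, ?_⟩
      · intro i
        show 0 ≤ t i - r * c i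
        by_cases hci : 0 < c i
        · have h1 : r ≤ t i / c i := hj₀min i (by simp [hT, hci])
          have h2 : r * c i ≤ t i := (le_div_iff₀ hci).mp h1
          linarith
        · push_neg at hci
          nlinarith [ht0 i, mul_nonpos_of_nonneg_of_nonpos hr0 hci]
      · intro i hi
        show t i - r * c i = 0
        by_cases h : i = j₀
        · subst h
          rw [hr, div_mul_cancel₀ _ hcj₀.ne', sub_self]
        · have his : i ∉ s := fun hh => hi (Finset.mem_erase.mpr ⟨h, hh⟩)
          rw [hts i his, hcs i his, mul_zero, sub_zero]
      · show ∑ i, t i • P i = ∑ i, (t i - r * c i) • P i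
        have : ∑ i, (t i - r * c i) • P i
            = ∑ i, t i • P i - r • ∑ i, c i • P i := by
          rw [Finset.smul_sum, ← Finset.sum_sub_distrib]
          congr 1; funext i; rw [sub_smul, smul_smul]
        rw [this, hcsum, smul_zero, sub_zero]
    set cext : Fin k → ℝ := fun i => if h : i ∈ s then c₀ ⟨i, h⟩ else 0 with hcext
    have hcs : ∀ i ∉ s, cext i = 0 := fun i hi => by simp [hcext, hi]
    have hsum : ∀ a : ℝ, ∑ i, (a • cext) i • P i = 0 := by
      intro a
      have := sum_support P s (a • cext) (fun i hi => by simp [hcs i hi])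
      rw [this]
      have : ∑ i : ↥s, (a • cext) (i : Fin k) • P (i : Fin k)
          = a • ∑ i : ↥s, c₀ i • P (i : Fin k) := by
        rw [Finset.smul_sum]
        congr 1; funext i
        simp [hcext, smul_smul, i.2]
      rw [this, hc₀sum, smul_zero]
    have hx : ∃ j ∈ s, (∑ i, t i • P i) ∈ coneOf P (s.erase j) := by
      rcases lt_or_gt_of_ne hi₀ with h | h
      · refine key (-cext) (fun i hi => by simp [hcs i hi]) ?_ ⟨i₀, ?_⟩
        · have := hsum (-1); simpa using this
        · show 0 < -cext (i₀ : Fin k)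
          simp only [hcext, i₀.2, dif_pos]
          simpa using h
      · refine key cext hcs ?_ ⟨i₀, ?_⟩
        · have := hsum 1; simpa using this
        · show 0 < cext (i₀ : Fin k)
          simp only [hcext, i₀.2, dif_pos]
          simpa using h
    obtain ⟨j, hj, hmem⟩ := hx
    exact Set.mem_biUnion hj hmem
  · exact Set.iUnion₂_subset fun j _ => coneOf_mono P (Finset.erase_subset j s)

lemma isClosed_coneOf {k : ℕ} (P : Fin k → H) (s : Finset (Fin k)) :
    IsClosed (coneOf P s) := by
  classical
  induction s using Finset.strongInduction with
  | _ s ih =>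
    by_cases hli : LinearIndependent ℝ (fun i : ↥s => P i)
    · exact isClosed_coneOf_of_li P s hli
    · rw [coneOf_reduce P s hli]
      have : s.Nonempty := by
        rcases s.eq_empty_or_nonempty with h | h
        · exfalso; apply hli
          subst h
          exact linearIndependent_empty_type
        · exact h
      refine Set.Finite.isClosed_biUnion (Set.finite_mem_finset s) ?_
      intro j hj
      exact ih (s.erase j) (Finset.erase_ssubset hj)

noncomputable def coneCC {k : ℕ} (P : Fin k → H) : ConvexCone ℝ H where
  carrier := coneOf P Finset.univ
  smul_mem' := by
    rintro c hc x ⟨t, ht0, -, rfl⟩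
    refine ⟨fun i => c * t i, fun i => mul_nonneg hc.le (ht0 i),
      fun i hi => absurd (Finset.mem_univ i) hi, ?_⟩
    rw [Finset.smul_sum]
    congr 1; funext i; rw [smul_smul]
  add_mem' := by
    rintro x ⟨t, ht0, -, rfl⟩ y ⟨u, hu0, -, rfl⟩
    refine ⟨fun i => t i + u i, fun i => add_nonneg (ht0 i) (hu0 i),
      fun i hi => absurd (Finset.mem_univ i) hi, ?_⟩
    rw [← Finset.sum_add_distrib]
    congr 1; funext i; rw [add_smul]

end ConeLemmas

theorem polytope_self_polar_iff {n : ℕ} (k : ℕ) (P : Fin k → E n)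
    (hP : ∀ i, P i ∈ sph n) (W : Set (E n)) (hWdef : W = ⋂ i, hemi (P i))
    (hW : SphConvexBody W) :
    W = polar W ↔ ((∀ i, P i ∈ W) ∧ W = sconv (Set.range P)) := by
  classical
  obtain ⟨hWclosed, hWhemi, ⟨hWsph, -⟩, hWint⟩ := hW
  have hWnorm : ∀ x ∈ W, ‖x‖ = 1 := fun x hx => hWsph hx
  have hinnerW : ∀ x ∈ W, ∀ i, 0 ≤ ⟪P i, x⟫ := by
    intro x hx i
    rw [hWdef] at hx
    exact (Set.mem_iInter.mp hx i).2
  have hmemW : ∀ x : E n, ‖x‖ = 1 → (∀ i, 0 ≤ ⟪P i, x⟫) → x ∈ W := by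
    intro x h1 h2
    rw [hWdef]
    exact Set.mem_iInter.mpr fun i => ⟨h1, h2 i⟩
  obtain ⟨C, hCsph, hCdisj⟩ := hWhemi
  have hCneg : ∀ x ∈ W, ⟪C, x⟫ < 0 := by
    intro x hx
    by_contra h
    push_neg at h
    have : x ∈ W ∩ hemi C := ⟨hx, hWnorm x hx, h⟩
    rw [hCdisj] at this
    exact this
  -- Key computation: inner product of a normalized nonneg combination with x
  have hnmz_inner : ∀ (x : E n) (m : ℕ) (t : Fin m → ℝ) (f : Fin m → E n),
      ⟪nmz (∑ i, t i • f i), x⟫ = ‖∑ i, t i • f i‖⁻¹ * ∑ i, t i * ⟪f i, x⟫ := by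
    intro x m t f
    unfold Sph.nmz
    rw [real_inner_smul_left, sum_inner]
    congr 1
    exact Finset.sum_congr rfl fun i _ => real_inner_smul_left _ _ _
  have sconv_inner : ∀ x ∈ W, ∀ z ∈ sconv (Set.range P), 0 ≤ ⟪z, x⟫ := by
    rintro x hx z ⟨m, t, f, hf, ht0, -, rfl⟩
    rw [hnmz_inner]
    refine mul_nonneg (inv_nonneg.mpr (norm_nonneg _)) (Finset.sum_nonneg fun i _ => ?_)
    obtain ⟨j, hj⟩ := hf i
    refine mul_nonneg (ht0 i) ?_
    rw [← hj]
    exact hinnerW x hx j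
  have sconv_sub : (∀ i, P i ∈ W) → sconv (Set.range P) ⊆ W := by
    rintro hPiW z ⟨m, t, f, hf, ht0, htsum, rfl⟩
    have hfW : ∀ i, f i ∈ W := fun i => by
      obtain ⟨j, hj⟩ := hf i
      rw [← hj]; exact hPiW j
    have hvne : (∑ i, t i • f i) ≠ 0 := by
      intro h0
      have hCv : ⟪C, ∑ i, t i • f i⟫ < 0 := by
        rw [inner_sum]
        have hterm : ∀ i, ⟪C, t i • f i⟫ = t i * ⟪C, f i⟫ := fun i =>
          real_inner_smul_right _ _ _
        obtain ⟨i₀, hi₀⟩ : ∃ i, 0 < t i := by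
          by_contra h
          push_neg at h
          have : ∀ i ∈ Finset.univ, t i = 0 := fun i _ => le_antisymm (h i) (ht0 i)
          rw [Finset.sum_eq_zero this] at htsum
          norm_num at htsum
        have : ∑ i, ⟪C, t i • f i⟫ < ∑ i : Fin m, (0 : ℝ) := by
          refine Finset.sum_lt_sum (fun i _ => ?_) ⟨i₀, Finset.mem_univ i₀, ?_⟩
          · rw [hterm i]
            exact mul_nonpos_of_nonneg_of_nonpos (ht0 i) (hCneg _ (hfW i)).le
          · rw [hterm i₀]
            exact mul_neg_of_pos_of_neg hi₀ (hCneg _ (hfW i₀))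
        simpa using this
      rw [h0, inner_zero_right] at hCv
      exact lt_irrefl _ hCv
    refine hmemW _ ?_ ?_
    · unfold Sph.nmz
      rw [norm_smul, norm_inv, norm_norm, inv_mul_cancel₀ (norm_ne_zero_iff.mpr hvne)]
    · intro j
      rw [real_inner_comm, hnmz_inner]
      refine mul_nonneg (inv_nonneg.mpr (norm_nonneg _)) (Finset.sum_nonneg fun i _ => ?_)
      exact mul_nonneg (ht0 i) (by rw [real_inner_comm]; exact hinnerW _ (hfW i) j)
  constructor
  · intro hpol
    have hPiW : ∀ i, P i ∈ W := by
      intro i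
      rw [hpol]
      refine ⟨hP i, fun z hz => ?_⟩
      rw [real_inner_comm]
      exact hinnerW z hz i
    refine ⟨hPiW, Set.Subset.antisymm ?_ (sconv_sub hPiW)⟩
    intro x hx
    have hPiD : ∀ j, P j ∈ coneOf P Finset.univ := by
      intro j
      refine ⟨fun i => if i = j then 1 else 0,
        fun i => by positivity, fun i hi => absurd (Finset.mem_univ i) hi, ?_⟩
      simp [ite_smul]
    have hxD : x ∈ coneOf P Finset.univ := by
      by_contra hxD
      have h0D : (0 : E n) ∈ coneOf P Finset.univ :=
        ⟨fun _ => 0, fun i => le_refl 0, fun _ _ => rfl, by simp⟩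
      obtain ⟨y, hy1, hy2⟩ : ∃ y, (∀ z ∈ coneOf P Finset.univ, 0 ≤ ⟪z, y⟫) ∧ ⟪y, x⟫ < 0 := by
        let K : ProperCone ℝ (E n) :=
          { carrier := coneOf P Finset.univ
            add_mem' := fun ha hb => (coneCC P).add_mem' ha hb
            zero_mem' := h0D
            smul_mem' := by
              rintro ⟨c, hc⟩ z hz
              rcases hc.lt_or_eq with hc | hc
              · exact (coneCC P).smul_mem' hc hz
              · subst hc
                show (0 : ℝ) • z ∈ coneOf P Finset.univ
                rw [zero_smul]
                exact h0D
            isClosed' := isClosed_coneOf P Finset.univ }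
        obtain ⟨y, hy1, hy2⟩ := ProperCone.hyperplane_separation' K (x₀ := x) hxD
        exact ⟨y, fun z hz => hy1 z hz, by rw [real_inner_comm]; exact hy2⟩
      have hy0 : y ≠ 0 := by
        intro h
        rw [h, inner_zero_left] at hy2
        exact lt_irrefl _ hy2
      set u : E n := ‖y‖⁻¹ • y with hu
      have huW : u ∈ W := by
        refine hmemW u ?_ fun i => ?_
        · rw [hu, norm_smul, norm_inv, norm_norm,
            inv_mul_cancel₀ (norm_ne_zero_iff.mpr hy0)]
        · rw [hu, real_inner_smul_right]
          exact mul_nonneg (inv_nonneg.mpr (norm_nonneg y)) (hy1 (P i) (hPiD i))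
      have hxpol : x ∈ polar W := hpol ▸ hx
      have h1 : 0 ≤ ⟪u, x⟫ := hxpol.2 u huW
      have h2 : ⟪u, x⟫ = ‖y‖⁻¹ * ⟪y, x⟫ := by rw [hu, real_inner_smul_left]
      have h3 : 0 < ‖y‖⁻¹ := inv_pos.mpr (norm_pos_iff.mpr hy0)
      rw [h2] at h1
      exact absurd h1 (not_le.mpr (mul_neg_of_pos_of_neg h3 hy2))
    obtain ⟨t, ht0, -, hxsum⟩ := hxD
    set S := ∑ i, t i with hS
    have hSpos : 0 < S := by
      rcases (Finset.sum_nonneg fun i _ => ht0 i : (0:ℝ) ≤ S).lt_or_eq with h | h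
      · exact h
      · exfalso
        have hall : ∀ i ∈ Finset.univ, t i = 0 := by
          intro i _
          have := (Finset.sum_eq_zero_iff_of_nonneg (fun i _ => ht0 i)).mp h.symm
          exact this i (Finset.mem_univ i)
        have : x = 0 := by
          rw [hxsum, Finset.sum_eq_zero fun i hi => by rw [hall i hi, zero_smul]]
        have h1 := hWnorm x hx
        rw [this] at h1
        simp at h1
    refine ⟨k, fun i => t i / S, P, fun i => Set.mem_range_self i,
      fun i => div_nonneg (ht0 i) hSpos.le, ?_, ?_⟩
    · rw [← Finset.sum_div, ← hS, div_self hSpos.ne']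
    · have hv : ∑ i, (t i / S) • P i = S⁻¹ • x := by
        rw [hxsum, Finset.smul_sum]
        exact Finset.sum_congr rfl fun i _ => by rw [smul_smul, div_eq_inv_mul]
      rw [hv]
      unfold Sph.nmz
      rw [norm_smul, norm_inv, Real.norm_eq_abs, abs_of_pos hSpos,
        hWnorm x hx, mul_one, inv_inv, smul_smul, mul_inv_cancel₀ hSpos.ne', one_smul]
  · rintro ⟨hPiW, hconv⟩
    apply Set.Subset.antisymm
    · intro x hx
      refine ⟨hWnorm x hx, fun z hz => ?_⟩
      rw [hconv] at hz
      exact sconv_inner x hx z hz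
    · rintro q ⟨hq1, hq2⟩
      refine hmemW q hq1 fun i => ?_
      exact hq2 (P i) (hPiW i)
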